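/- Fix integers n ≥ 3 and k ≥ 1, and let H(n,k) be the Hamming graph whose vertices are tuples I = (i_1,…,i_k) ∈ [n]^k, with I adjacent to J iff they differ in exactly one coordinate. Then for every pair of distinct vertices I, J of H(n,k) there exist at least n − 1 pairwise edge-disjoint paths from I to J, each of length at most k + 1. -/

import Mathlib

open Finset

/-- The Hamming graph on `[n]^k`: two tuples are adjacent iff they differ in
exactly one coordinate. -/
def hammingGraph (n k : ℕ) : SimpleGraph (Fin k → Fin n) where
  Adj I J := hammingDist I J = 1
  symm := by
    constructor
    intro I J h
    show hammingDist J I = 1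
    rwa [hammingDist_comm]
  loopless := by
    constructor
    intro I h
    change hammingDist I I = 1 at h
    rw [hammingDist_self] at h
    exact one_ne_zero h.symm

namespace HGaux

open SimpleGraph Walk

variable {n k : ℕ}

lemma adj_update (X : Fin k → Fin n) (c : Fin k) (a : Fin n) (h : a ≠ X c) :
    (hammingGraph n k).Adj X (Function.update X c a) := by
  show hammingDist X (Function.update X c a) = 1
  have hset : ({i | X i ≠ Function.update X c a i} : Finset (Fin k)) = {c} := by
    ext q
    simp only [Finset.mem_filter, Finset.mem_univ, true_and, Finset.mem_singleton,
      Function.update_apply]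
    constructor
    · intro hq
      by_contra hqc
      rw [if_neg hqc] at hq
      exact hq rfl
    · rintro rfl
      rw [if_pos rfl]
      exact fun h' => h h'.symm
  rw [hammingDist, hset, Finset.card_singleton]

/-- `setOn J X L` replaces the coordinates in `L` by those of `J`. -/
def setOn (J X : Fin k → Fin n) (L : List (Fin k)) : Fin k → Fin n :=
  fun p => if p ∈ L then J p else X p

/-- The walk from `X` which changes the coordinates in `L` (one at a time)
to the corresponding value of `J`. -/
def chain (J : Fin k → Fin n) : ∀ (L : List (Fin k)) (X : Fin k → Fin n),
    L.Nodup → (∀ p ∈ L, X p ≠ J p) → (hammingGraph n k).Walk X (setOn J X L)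
  | [], X, _, _ => SimpleGraph.Walk.nil.copy rfl (funext fun p => by simp [setOn])
  | p :: L, X, hnd, h =>
    SimpleGraph.Walk.cons
      (adj_update X p (J p) (Ne.symm (h p (List.mem_cons_self))))
      ((chain J L (Function.update X p (J p)) (List.nodup_cons.1 hnd).2
        (fun q hq => by
          rw [Function.update_apply,
            if_neg (by rintro rfl; exact (List.nodup_cons.1 hnd).1 hq)]
          exact h q (List.mem_cons_of_mem _ hq))).copy rfl
        (funext fun q => by
          by_cases h1 : q ∈ L
          · simp [setOn, h1]
          · by_cases h2 : q = p
            · subst h2; simp [setOn, h1]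
            · simp [setOn, h1, h2, Function.update_apply]))

lemma chain_length (J : Fin k → Fin n) (L : List (Fin k)) :
    ∀ (X : Fin k → Fin n) (hnd : L.Nodup) (h : ∀ p ∈ L, X p ≠ J p),
      (chain J L X hnd h).length = L.length := by
  induction L with
  | nil => intro X hnd h; simp [chain]
  | cons p L ih => intro X hnd h; simp [chain, ih]

lemma chain_support (J : Fin k → Fin n) (L : List (Fin k)) :
    ∀ (X : Fin k → Fin n) (hnd : L.Nodup) (h : ∀ p ∈ L, X p ≠ J p),
      ∀ v ∈ (chain J L X hnd h).support, ∀ c, c ∉ L → v c = X c := by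
  induction L with
  | nil =>
    intro X hnd h v hv c _
    simp [chain] at hv
    subst hv; rfl
  | cons p L ih =>
    intro X hnd h v hv c hc
    simp only [chain, Walk.support_copy, Walk.support_cons, List.mem_cons] at hv
    rcases hv with rfl | hv
    · rfl
    · have hcL : c ∉ L := fun h' => hc (List.mem_cons_of_mem _ h')
      have := ih _ _ _ v hv c hcL
      rw [this, Function.update_apply,
        if_neg (fun h' : c = p => hc (by rw [h']; exact List.mem_cons_self))]

lemma chain_isPath (J : Fin k → Fin n) (L : List (Fin k)) :
    ∀ (X : Fin k → Fin n) (hnd : L.Nodup) (h : ∀ p ∈ L, X p ≠ J p),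
      (chain J L X hnd h).IsPath := by
  induction L with
  | nil => intro X hnd h; simp [chain]
  | cons p L ih =>
    intro X hnd h
    simp only [chain]
    rw [Walk.cons_isPath_iff]
    constructor
    · rw [Walk.isPath_copy]
      exact ih _ _ _
    · intro hX
      rw [Walk.support_copy] at hX
      have := chain_support J L _ _ _ X hX p (List.nodup_cons.1 hnd).1
      rw [Function.update_self] at this
      exact h p (List.mem_cons_self) this

/-- The initial leg: from `I` to `I` with coordinate `c` set to `a`
(the empty walk if `a = I c`). -/
def firstLeg (I : Fin k → Fin n) (c : Fin k) (a : Fin n) :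
    (hammingGraph n k).Walk I (Function.update I c a) :=
  if h : a = I c then
    SimpleGraph.Walk.nil.copy rfl (by rw [h, Function.update_eq_self])
  else SimpleGraph.Walk.cons (adj_update I c a h) SimpleGraph.Walk.nil

lemma firstLeg_support_pos (I : Fin k → Fin n) (c : Fin k) (a : Fin n) (h : a = I c) :
    (firstLeg I c a).support = [I] := by
  rw [firstLeg, dif_pos h]; simp

lemma firstLeg_support_neg (I : Fin k → Fin n) (c : Fin k) (a : Fin n) (h : a ≠ I c) :
    (firstLeg I c a).support = [I, Function.update I c a] := by
  rw [firstLeg, dif_neg h]; simp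

lemma firstLeg_edges_pos (I : Fin k → Fin n) (c : Fin k) (a : Fin n) (h : a = I c) :
    (firstLeg I c a).edges = [] := by
  rw [firstLeg, dif_pos h]; simp

lemma firstLeg_edges_neg (I : Fin k → Fin n) (c : Fin k) (a : Fin n) (h : a ≠ I c) :
    (firstLeg I c a).edges = [s(I, Function.update I c a)] := by
  rw [firstLeg, dif_neg h]; simp

lemma firstLeg_length (I : Fin k → Fin n) (c : Fin k) (a : Fin n) :
    (firstLeg I c a).length ≤ 1 := by
  rw [firstLeg]
  split <;> simp

section Mid

variable (I J : Fin k → Fin n) (c : Fin k) (L : List (Fin k)) (a : Fin n)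
  (hnd : L.Nodup) (hL : ∀ p ∈ L, p ≠ c ∧ I p ≠ J p)
  (hcov : ∀ p, I p ≠ J p → p = c ∨ p ∈ L)

/-- The middle leg: from `I[c ↦ a]` to `J[c ↦ a]`, changing the coordinates
in `L` one at a time. -/
def midWalk :
    (hammingGraph n k).Walk (Function.update I c a) (Function.update J c a) :=
  (chain J L (Function.update I c a) hnd (fun p hp => by
    rw [Function.update_apply, if_neg (hL p hp).1]
    exact (hL p hp).2)).copy rfl
    (funext fun q => by
      by_cases h1 : q ∈ L
      · simp [setOn, h1, Function.update_apply, if_neg (hL q h1).1]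
      · by_cases h2 : q = c
        · subst h2; simp [setOn, h1]
        · have : I q = J q := by
            by_contra h
            rcases hcov q h with h' | h'
            · exact h2 h'
            · exact h1 h'
          simp [setOn, h1, Function.update_apply, h2, this])

lemma midWalk_support :
    ∀ v ∈ (midWalk I J c L a hnd hL hcov).support, v c = a := by
  intro v hv
  rw [midWalk, Walk.support_copy] at hv
  have hcL : c ∉ L := fun h => (hL c h).1 rfl
  have := chain_support J L _ _ _ v hv c hcL
  rwa [Function.update_self] at this

lemma midWalk_isPath : (midWalk I J c L a hnd hL hcov).IsPath := by
  rw [midWalk, Walk.isPath_copy]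
  exact chain_isPath J L _ _ _

lemma midWalk_length : (midWalk I J c L a hnd hL hcov).length = L.length := by
  rw [midWalk, Walk.length_copy, chain_length]

variable (haJ : a ≠ J c)

/-- The full walk from `I` to `J` through the value `a` at coordinate `c`. -/
def QWalk : (hammingGraph n k).Walk I J :=
  (firstLeg I c a).append ((midWalk I J c L a hnd hL hcov).append
    (SimpleGraph.Walk.cons ((adj_update J c a haJ).symm) SimpleGraph.Walk.nil))

lemma QWalk_length (hk : 1 ≤ k) (hLlen : L.length ≤ k - 1) :
    (QWalk I J c L a hnd hL hcov haJ).length ≤ k + 1 := by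
  rw [QWalk, Walk.length_append, Walk.length_append, midWalk_length]
  have h1 := firstLeg_length I c a
  simp only [Walk.length_cons, Walk.length_nil]
  omega

lemma QWalk_isPath (hIJ : I ≠ J) : (QWalk I J c L a hnd hL hcov haJ).IsPath := by
  set mid := midWalk I J c L a hnd hL hcov with hmid
  set rest := mid.append
    (SimpleGraph.Walk.cons ((adj_update J c a haJ).symm) SimpleGraph.Walk.nil) with hrest
  have hrest_sup : rest.support = mid.support ++ [J] := by
    rw [hrest, Walk.support_append]
    simp
  have hJmid : J ∉ mid.support := by
    intro h
    exact haJ (midWalk_support I J c L a hnd hL hcov J h).symm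
  have hrest_nodup : rest.support.Nodup := by
    rw [hrest_sup, List.nodup_append]
    refine ⟨(midWalk_isPath I J c L a hnd hL hcov).support_nodup, List.nodup_singleton _, ?_⟩
    intro x hx y hy
    rw [List.mem_singleton] at hy
    rw [hy]
    exact fun h => hJmid (h ▸ hx)
  rw [QWalk, Walk.isPath_def, Walk.support_append]
  by_cases hIc : a = I c
  · rw [firstLeg_support_pos I c a hIc]
    have hupd : Function.update I c a = I := by rw [hIc, Function.update_eq_self]
    have hsup : rest.support = I :: rest.support.tail := by
      conv_lhs => rw [rest.support_eq_cons]
      exact congrFun (congrArg List.cons hupd) _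
    rw [List.singleton_append, ← hsup]
    exact hrest_nodup
  · rw [firstLeg_support_neg I c a hIc]
    have hstep : [I, Function.update I c a] ++ rest.support.tail = I :: rest.support := by
      conv_rhs => rw [rest.support_eq_cons]
      rfl
    rw [hstep, List.nodup_cons]
    refine ⟨?_, hrest_nodup⟩
    intro hI
    rw [hrest_sup, List.mem_append] at hI
    rcases hI with hI | hI
    · exact hIc (midWalk_support I J c L a hnd hL hcov I hI).symm
    · rw [List.mem_singleton] at hI
      exact hIJ hI

lemma QWalk_edges :
    ∀ e ∈ (QWalk I J c L a hnd hL hcov haJ).edges,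
      (a ≠ I c ∧ e = s(I, Function.update I c a)) ∨
      e = s(Function.update J c a, J) ∨
      ∃ u v, e = s(u, v) ∧ u c = a ∧ v c = a := by
  intro e he
  rw [QWalk, Walk.edges_append, Walk.edges_append] at he
  rcases List.mem_append.1 he with he | he
  · by_cases hIc : a = I c
    · rw [firstLeg_edges_pos I c a hIc] at he
      exact absurd he List.not_mem_nil
    · rw [firstLeg_edges_neg I c a hIc, List.mem_singleton] at he
      exact Or.inl ⟨hIc, he⟩
  · rcases List.mem_append.1 he with he | he
    · right; right
      revert he
      induction e using Sym2.ind with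
      | _ u v =>
        intro he
        exact ⟨u, v, rfl,
          midWalk_support I J c L a hnd hL hcov u (Walk.fst_mem_support_of_mem_edges _ he),
          midWalk_support I J c L a hnd hL hcov v (Walk.snd_mem_support_of_mem_edges _ he)⟩
    · simp only [Walk.edges_cons, Walk.edges_nil, List.mem_singleton] at he
      exact Or.inr (Or.inl he)

lemma QWalk_disjoint (hIJ : I ≠ J) (b : Fin n) (hbJ : b ≠ J c) (hab : a ≠ b) :
    ∀ e ∈ (QWalk I J c L a hnd hL hcov haJ).edges,
      e ∉ (QWalk I J c L b hnd hL hcov hbJ).edges := by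
  intro e hea heb
  rcases QWalk_edges I J c L a hnd hL hcov haJ e hea with
    ⟨haI, rfl⟩ | rfl | ⟨u, v, rfl, hu, hv⟩
  · rcases QWalk_edges I J c L b hnd hL hcov hbJ _ heb with
      ⟨hbI, h2⟩ | h2 | ⟨u', v', h2, hu', hv'⟩
    · rcases Sym2.eq_iff.1 h2 with ⟨h3, h4⟩ | ⟨h3, h4⟩
      · have := congrFun h4 c
        rw [Function.update_self, Function.update_self] at this
        exact hab this
      · have := congrFun h3 c
        rw [Function.update_self] at this
        exact hbI this.symm
    · rcases Sym2.eq_iff.1 h2 with ⟨h3, h4⟩ | ⟨h3, h4⟩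
      · have := congrFun h4 c
        rw [Function.update_self] at this
        exact haJ this
      · exact hIJ h3
    · rcases Sym2.eq_iff.1 h2 with ⟨h3, h4⟩ | ⟨h3, h4⟩
      · have := congrFun h4 c
        rw [Function.update_self] at this
        exact hab (this.trans hv')
      · have := congrFun h4 c
        rw [Function.update_self] at this
        exact hab (this.trans hu')
  · rcases QWalk_edges I J c L b hnd hL hcov hbJ _ heb with
      ⟨hbI, h2⟩ | h2 | ⟨u', v', h2, hu', hv'⟩
    · rcases Sym2.eq_iff.1 h2 with ⟨h3, h4⟩ | ⟨h3, h4⟩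
      · have := congrFun h4 c
        rw [Function.update_self] at this
        exact hbJ this.symm
      · exact hIJ h4.symm
    · rcases Sym2.eq_iff.1 h2 with ⟨h3, h4⟩ | ⟨h3, h4⟩
      · have := congrFun h3 c
        rw [Function.update_self, Function.update_self] at this
        exact hab this
      · have := congrFun h3 c
        rw [Function.update_self] at this
        exact haJ this
    · rcases Sym2.eq_iff.1 h2 with ⟨h3, h4⟩ | ⟨h3, h4⟩
      · have := congrFun h4 c
        exact hbJ (this.trans hv').symm
      · have := congrFun h4 c
        exact hbJ (this.trans hu').symm
  · rcases QWalk_edges I J c L b hnd hL hcov hbJ _ heb with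
      ⟨hbI, h2⟩ | h2 | ⟨u', v', h2, hu', hv'⟩
    · rcases Sym2.eq_iff.1 h2 with ⟨h3, h4⟩ | ⟨h3, h4⟩
      · have := congrFun h4 c
        rw [Function.update_self] at this
        exact hab (hv.symm.trans this)
      · have := congrFun h3 c
        rw [Function.update_self] at this
        exact hab (hu.symm.trans this)
    · rcases Sym2.eq_iff.1 h2 with ⟨h3, h4⟩ | ⟨h3, h4⟩
      · have := congrFun h4 c
        exact haJ (hv.symm.trans this)
      · have := congrFun h3 c
        exact haJ (hu.symm.trans this)
    · rcases Sym2.eq_iff.1 h2 with ⟨h3, h4⟩ | ⟨h3, h4⟩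
      · have := congrFun h3 c
        exact hab ((hu.symm.trans this).trans hu')
      · have := congrFun h3 c
        exact hab ((hu.symm.trans this).trans hv')

end Mid

end HGaux

theorem stmt_13 (n k : ℕ) (hn : 3 ≤ n) (hk : 1 ≤ k)
    (I J : Fin k → Fin n) (hIJ : I ≠ J) :
    ∃ P : Fin (n - 1) → (hammingGraph n k).Walk I J,
      (∀ i, (P i).IsPath ∧ (P i).length ≤ k + 1) ∧
      ∀ i j, i ≠ j → ∀ e ∈ (P i).edges, e ∉ (P j).edges := by
  classical
  obtain ⟨c, hc⟩ : ∃ c, I c ≠ J c := by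
    by_contra h
    push_neg at h
    exact hIJ (funext h)
  set D : Finset (Fin k) := Finset.univ.filter fun p => I p ≠ J p with hD
  have hcD : c ∈ D := by simp [hD, hc]
  set L : List (Fin k) := (D.erase c).toList with hLdef
  have hnd : L.Nodup := Finset.nodup_toList _
  have hL : ∀ p ∈ L, p ≠ c ∧ I p ≠ J p := by
    intro p hp
    rw [hLdef, Finset.mem_toList, Finset.mem_erase] at hp
    refine ⟨hp.1, ?_⟩
    have := hp.2
    rw [hD, Finset.mem_filter] at this
    exact this.2
  have hcov : ∀ p, I p ≠ J p → p = c ∨ p ∈ L := by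
    intro p hp
    by_cases h : p = c
    · exact Or.inl h
    · refine Or.inr ?_
      rw [hLdef, Finset.mem_toList, Finset.mem_erase]
      exact ⟨h, by rw [hD, Finset.mem_filter]; exact ⟨Finset.mem_univ _, hp⟩⟩
  have hLlen : L.length ≤ k - 1 := by
    have h1 : L.length = (D.erase c).card := Finset.length_toList _
    have h2 : (D.erase c).card = D.card - 1 := Finset.card_erase_of_mem hcD
    have h3 : D.card ≤ k := by simpa using Finset.card_le_univ D
    omega
  have hn1 : n - 1 + 1 = n := by omega
  let g : Fin (n - 1) → Fin n := fun i =>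
    Fin.cast hn1 ((Fin.cast hn1.symm (J c)).succAbove i)
  have hgJ : ∀ i, g i ≠ J c := by
    intro i h
    have h' : (Fin.cast hn1.symm (J c)).succAbove i = Fin.cast hn1.symm (J c) := by
      apply Fin.ext
      have := congrArg Fin.val h
      simpa [g] using this
    exact Fin.succAbove_ne _ i h'
  have hginj : Function.Injective g := by
    intro i j h
    have h' : (Fin.cast hn1.symm (J c)).succAbove i =
        (Fin.cast hn1.symm (J c)).succAbove j := by
      apply Fin.ext
      have := congrArg Fin.val h
      simpa [g] using this
    exact Fin.succAbove_right_injective h'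
  refine ⟨fun i => HGaux.QWalk I J c L (g i) hnd hL hcov (hgJ i), fun i => ⟨?_, ?_⟩, ?_⟩
  · exact HGaux.QWalk_isPath I J c L (g i) hnd hL hcov (hgJ i) hIJ
  · exact HGaux.QWalk_length I J c L (g i) hnd hL hcov (hgJ i) hk hLlen
  · intro i j hij e hei hej
    exact HGaux.QWalk_disjoint I J c L (g i) hnd hL hcov (hgJ i) hIJ (g j) (hgJ j)
      (fun h => hij (hginj h)) e hei hej
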